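/- Let G = (V,E) be a finite simple graph, let t > 0 and β > 0 be real numbers, and suppose μ is a finitely supported probability distribution over partitions of V such that every partition in the support of μ is weakly t-bounded (every part has weak diameter at most t), and for every vertex z ∈ V the probability under μ that B_2(z) ⊆ P(z) is at least 1 − 2β/t, where P(z) denotes the part of the sampled partition P containing z. Then V admits an ordered partition C_1, …, C_k into nonempty clusters, each of weak diameter at most t, with (2β/t)-cluster-degeneracy, i.e., for every i, |{ v ∈ C_i : dist_G(v, V \ (C_1 ∪ … ∪ C_i)) ≤ 2 }| ≤ (2β/t)·|C_i|. -/

import Mathlib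

open scoped Classical

open SimpleGraph

variable {V : Type*}

/-- The ball of radius `j` (w.r.t. the shortest-path distance in `G`) around `v`. -/
def sball (G : SimpleGraph V) (v : V) (j : ℕ) : Set V := {u | G.edist v u ≤ (j : ℕ∞)}

/-- The shortest-path distance from `u` to `x` is finite and at most the real number `t`. -/
def edistLE (G : SimpleGraph V) (u x : V) (t : ℝ) : Prop :=
  ∃ m : ℕ, G.edist u x = (m : ℕ∞) ∧ (m : ℝ) ≤ t

/-- The set of "close-to-boundary" vertices of the `i`-th cluster of an ordered partition:
vertices of `C i` at distance at most `2` from `V \ (C 1 ∪ … ∪ C i)`. -/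
def closeSet (G : SimpleGraph V) {k : ℕ} (C : Fin k → Set V) (i : Fin k) : Set V :=
  {v ∈ C i | ∃ u : V, (∀ j : Fin k, j ≤ i → u ∉ C j) ∧ G.edist v u ≤ (2 : ℕ∞)}

lemma key_step [Fintype V] (G : SimpleGraph V) (t β : ℝ)
    {ι : Type*} [Fintype ι] (w : ι → ℝ) (Ps : ι → Set (Set V))
    (hw0 : ∀ i, 0 ≤ w i) (hw1 : ∑ i, w i = 1)
    (hpart : ∀ i, w i ≠ 0 → Setoid.IsPartition (Ps i))
    (hdiam : ∀ i, w i ≠ 0 → ∀ P ∈ Ps i, ∀ u ∈ P, ∀ x ∈ P, edistLE G u x t)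
    (hpad : ∀ z : V, 1 - 2 * β / t ≤
      ∑ i ∈ Finset.univ.filter (fun i => ∀ P ∈ Ps i, z ∈ P → sball G z 2 ⊆ P), w i)
    (S : Finset V) (hS : S.Nonempty) :
    ∃ C : Finset V, C ⊆ S ∧ C.Nonempty ∧ (∀ u ∈ C, ∀ x ∈ C, edistLE G u x t) ∧
      (((C.filter (fun v => ∃ u ∈ S \ C, G.edist v u ≤ (2:ℕ∞))).card : ℝ)
        ≤ (2*β/t) * (C.card : ℝ)) := by
  set ε := 2*β/t with hε
  -- badness
  set bad : ι → V → Prop := fun i v => ¬ (∀ P ∈ Ps i, v ∈ P → sball G v 2 ⊆ P) with hbad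
  have hptwise : ∀ v : V, ∑ i ∈ Finset.univ.filter (fun i => bad i v), w i ≤ ε := by
    intro v
    have h1 := Finset.sum_filter_add_sum_filter_not Finset.univ
      (fun i => ∀ P ∈ Ps i, v ∈ P → sball G v 2 ⊆ P) w
    rw [hw1] at h1
    have h2 := hpad v
    have : ∑ i ∈ Finset.univ.filter (fun i => ¬ ∀ P ∈ Ps i, v ∈ P → sball G v 2 ⊆ P), w i
        ≤ ε := by linarith
    exact this
  -- step 1 : choose a good distribution index
  have e1 : ∀ i, w i * ((S.filter (bad i)).card : ℝ) = ∑ v ∈ S, (if bad i v then w i else 0) := by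
    intro i
    rw [← Finset.sum_filter, Finset.sum_const, nsmul_eq_mul, mul_comm]
  have step1 : ∃ i, w i ≠ 0 ∧ ((S.filter (bad i)).card : ℝ) ≤ ε * (S.card : ℝ) := by
    by_contra hcon
    simp only [not_exists, not_and, not_le] at hcon
    have hsum : ∑ i, w i * ((S.filter (bad i)).card : ℝ) ≤ (S.card : ℝ) * ε := by
      calc ∑ i, w i * ((S.filter (bad i)).card : ℝ)
          = ∑ i, ∑ v ∈ S, (if bad i v then w i else 0) := by
            exact Finset.sum_congr rfl (fun i _ => e1 i)
        _ = ∑ v ∈ S, ∑ i, (if bad i v then w i else 0) := Finset.sum_comm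
        _ ≤ ∑ _v ∈ S, ε := Finset.sum_le_sum (fun v _ => by
            rw [← Finset.sum_filter]; exact hptwise v)
        _ = (S.card : ℝ) * ε := by rw [Finset.sum_const, nsmul_eq_mul]
    have hex : ∃ i0, w i0 ≠ 0 := by
      by_contra h
      push_neg at h
      rw [Finset.sum_eq_zero (fun i _ => h i)] at hw1
      norm_num at hw1
    obtain ⟨i0, hi0⟩ := hex
    have hlt : ∑ i, w i * (ε * (S.card : ℝ)) < ∑ i, w i * ((S.filter (bad i)).card : ℝ) := by
      refine Finset.sum_lt_sum (fun i _ => ?_) ⟨i0, Finset.mem_univ i0, ?_⟩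
      · rcases eq_or_ne (w i) 0 with h | h
        · simp [h]
        · exact mul_le_mul_of_nonneg_left (hcon i h).le (hw0 i)
      · exact mul_lt_mul_of_pos_left (hcon i0 hi0) ((hw0 i0).lt_of_ne (Ne.symm hi0))
    rw [← Finset.sum_mul, hw1, one_mul] at hlt
    nlinarith [hlt, hsum]
  obtain ⟨i, hi, hAi⟩ := step1
  obtain ⟨-, huniq⟩ := hpart i hi
  let f : V → Set V := fun v => (huniq v).choose
  have hf1 : ∀ v, f v ∈ Ps i ∧ v ∈ f v := fun v => (huniq v).choose_spec.1
  have hf2 : ∀ v P, P ∈ Ps i → v ∈ P → P = f v := fun v P hP hvP =>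
    (huniq v).choose_spec.2 P ⟨hP, hvP⟩
  set T : Finset (Set V) := S.image f with hT
  have hfib : ∀ v ∈ S, f v ∈ T := fun v hv => Finset.mem_image_of_mem f hv
  have hScard : S.card = ∑ P ∈ T, (S.filter (fun v => f v = P)).card :=
    Finset.card_eq_sum_card_fiberwise hfib
  have hbadsub : ∀ P ∈ T, (S.filter (fun v => f v = P)).filter
      (fun v => ∃ u ∈ S \ (S.filter (fun v => f v = P)), G.edist v u ≤ (2:ℕ∞))
      ⊆ (S.filter (bad i)).filter (fun v => f v = P) := by
    intro P hP v hv
    simp only [Finset.mem_filter, Finset.mem_sdiff, not_and] at hv ⊢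
    obtain ⟨⟨hvS, hfv⟩, u, ⟨huS, hu⟩, hdist⟩ := hv
    refine ⟨⟨hvS, ?_⟩, hfv⟩
    intro hgood
    have hball := hgood (f v) (hf1 v).1 (hf1 v).2
    have huP : u ∈ f v := hball (show u ∈ sball G v 2 from by
      simp only [sball, Set.mem_setOf_eq]
      exact_mod_cast hdist)
    have : f u = P := ((hf2 u (f v) (hf1 v).1 huP).symm).trans hfv
    exact hu huS this
  have hbadcount : ∑ P ∈ T, ((((S.filter (fun v => f v = P)).filter
        (fun v => ∃ u ∈ S \ (S.filter (fun v => f v = P)), G.edist v u ≤ (2:ℕ∞))).card : ℝ))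
      ≤ ε * ∑ P ∈ T, ((S.filter (fun v => f v = P)).card : ℝ) := by
    have h1 : ∑ P ∈ T, ((S.filter (bad i)).filter (fun v => f v = P)).card
        = (S.filter (bad i)).card :=
      (Finset.card_eq_sum_card_fiberwise
        (fun v hv => hfib v (Finset.mem_of_mem_filter v hv))).symm
    have h2 : ∑ P ∈ T, ((((S.filter (fun v => f v = P)).filter
        (fun v => ∃ u ∈ S \ (S.filter (fun v => f v = P)), G.edist v u ≤ (2:ℕ∞))).card : ℝ))
        ≤ ((S.filter (bad i)).card : ℝ) := by
      rw [← h1]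
      push_cast
      exact Finset.sum_le_sum (fun P hP => by
        exact_mod_cast Nat.cast_le.mpr (Finset.card_le_card (hbadsub P hP)))
    have h3 : ε * (S.card : ℝ) = ε * ∑ P ∈ T, ((S.filter (fun v => f v = P)).card : ℝ) := by
      rw [hScard]; push_cast; ring
    linarith [h2, hAi, h3.le]
  have hTne : T.Nonempty := hS.image f
  have hexP : ∃ P ∈ T, ((((S.filter (fun v => f v = P)).filter
        (fun v => ∃ u ∈ S \ (S.filter (fun v => f v = P)), G.edist v u ≤ (2:ℕ∞))).card : ℝ))
      ≤ ε * ((S.filter (fun v => f v = P)).card : ℝ) := by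
    by_contra h
    push_neg at h
    have hlt := Finset.sum_lt_sum_of_nonempty hTne (fun P hP => h P hP)
    rw [← Finset.mul_sum] at hlt
    linarith [hbadcount, hlt]
  obtain ⟨P, hPT, hPbound⟩ := hexP
  refine ⟨S.filter (fun v => f v = P), Finset.filter_subset _ _, ?_, ?_, hPbound⟩
  · obtain ⟨v, hvS, hfv⟩ := Finset.mem_image.mp hPT
    exact ⟨v, Finset.mem_filter.mpr ⟨hvS, hfv⟩⟩
  · intro u hu x hx
    simp only [Finset.mem_filter] at hu hx
    have hPmem : P ∈ Ps i := hu.2 ▸ (hf1 u).1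
    exact hdiam i hi P hPmem u (hu.2 ▸ (hf1 u).2) x (hx.2 ▸ (hf1 x).2)

lemma build_clusters [Fintype V] (G : SimpleGraph V) (t β : ℝ)
    {ι : Type*} [Fintype ι] (w : ι → ℝ) (Ps : ι → Set (Set V))
    (hw0 : ∀ i, 0 ≤ w i) (hw1 : ∑ i, w i = 1)
    (hpart : ∀ i, w i ≠ 0 → Setoid.IsPartition (Ps i))
    (hdiam : ∀ i, w i ≠ 0 → ∀ P ∈ Ps i, ∀ u ∈ P, ∀ x ∈ P, edistLE G u x t)
    (hpad : ∀ z : V, 1 - 2 * β / t ≤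
      ∑ i ∈ Finset.univ.filter (fun i => ∀ P ∈ Ps i, z ∈ P → sball G z 2 ⊆ P), w i) :
    ∀ n : ℕ, ∀ S : Finset V, S.card ≤ n →
    ∃ (k : ℕ) (C : Fin k → Finset V),
      (∀ i, (C i).Nonempty) ∧
      (∀ v, v ∈ S ↔ ∃ i, v ∈ C i) ∧
      (∀ i j, i ≠ j → Disjoint (C i) (C j)) ∧
      (∀ i, ∀ u ∈ C i, ∀ x ∈ C i, edistLE G u x t) ∧
      (∀ i : Fin k, (((C i).filter (fun v => ∃ u ∈ S,
          (∀ j, j ≤ i → u ∉ C j) ∧ G.edist v u ≤ (2:ℕ∞))).card : ℝ)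
        ≤ (2*β/t) * ((C i).card : ℝ)) := by
  intro n
  induction n with
  | zero =>
    intro S hS
    have : S = ∅ := Finset.card_eq_zero.mp (Nat.le_zero.mp hS)
    subst this
    exact ⟨0, Fin.elim0, fun i => i.elim0, fun v => by simp, fun i => i.elim0,
      fun i => i.elim0, fun i => i.elim0⟩
  | succ m ih =>
    intro S hS
    rcases S.eq_empty_or_nonempty with hE | hne
    · subst hE
      exact ⟨0, Fin.elim0, fun i => i.elim0, fun v => by simp, fun i => i.elim0,
        fun i => i.elim0, fun i => i.elim0⟩
    · obtain ⟨C₀, hC₀S, hC₀ne, hC₀diam, hC₀bad⟩ :=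
        key_step G t β w Ps hw0 hw1 hpart hdiam hpad S hne
      set S' : Finset V := S \ C₀ with hS'
      have hS'card : S'.card ≤ m := by
        have h1 : S'.card < S.card := by
          apply Finset.card_lt_card
          rw [Finset.ssubset_iff_of_subset (Finset.sdiff_subset)]
          obtain ⟨v, hv⟩ := hC₀ne
          exact ⟨v, hC₀S hv, by simp [hS', hv]⟩
        omega
      obtain ⟨k', C', hne', hmem', hdisj', hdiam', hbad'⟩ := ih S' hS'card
      have hC'sub : ∀ j, ∀ v ∈ C' j, v ∈ S' := fun j v hv => (hmem' v).mpr ⟨j, hv⟩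
      refine ⟨k' + 1, Fin.cons C₀ C', ?_, ?_, ?_, ?_, ?_⟩
      · intro i
        refine Fin.cases ?_ ?_ i
        · simpa using hC₀ne
        · intro j; simpa using hne' j
      · intro v
        constructor
        · intro hv
          by_cases hvC₀ : v ∈ C₀
          · exact ⟨0, by simpa using hvC₀⟩
          · obtain ⟨j, hj⟩ := (hmem' v).mp (by simp [hS', hv, hvC₀])
            exact ⟨j.succ, by simpa using hj⟩
        · intro ⟨i, hi⟩
          refine Fin.cases ?_ ?_ i hi
          · intro h; exact hC₀S (by simpa using h)
          · intro j h
            have : v ∈ S' := hC'sub j v (by simpa using h)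
            exact (Finset.sdiff_subset : S \ C₀ ⊆ S) this
      · intro i j hij
        induction i using Fin.cases with
        | zero =>
          induction j using Fin.cases with
          | zero => exact absurd rfl hij
          | succ j' =>
            simp only [Fin.cons_zero, Fin.cons_succ]
            rw [Finset.disjoint_left]
            intro a ha ha'
            have h := hC'sub j' a ha'
            rw [hS', Finset.mem_sdiff] at h
            exact h.2 ha
        | succ i' =>
          induction j using Fin.cases with
          | zero =>
            simp only [Fin.cons_zero, Fin.cons_succ]
            rw [Finset.disjoint_right]
            intro a ha ha'
            have h := hC'sub i' a ha'
            rw [hS', Finset.mem_sdiff] at h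
            exact h.2 ha
          | succ j' =>
            simp only [Fin.cons_succ]
            exact hdisj' i' j' (fun h => hij (by rw [h]))
      · intro i
        refine Fin.cases ?_ ?_ i
        · simpa using hC₀diam
        · intro j; simpa using hdiam' j
      · intro i
        refine Fin.cases ?_ ?_ i
        · simp only [Fin.cons_zero]
          refine le_trans ?_ hC₀bad
          have hsub : C₀.filter (fun v => ∃ u ∈ S,
              (∀ j, j ≤ (0 : Fin (k'+1)) → u ∉ (Fin.cons C₀ C' : Fin (k'+1) → Finset V) j) ∧ G.edist v u ≤ (2:ℕ∞))
              ⊆ C₀.filter (fun v => ∃ u ∈ S \ C₀, G.edist v u ≤ (2:ℕ∞)) := by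
            refine Finset.monotone_filter_right _ ?_
            intro v _ ⟨u, huS, hnot, hd⟩
            exact ⟨u, Finset.mem_sdiff.mpr ⟨huS, by simpa using hnot 0 le_rfl⟩, hd⟩
          exact_mod_cast Nat.cast_le.mpr (Finset.card_le_card hsub)
        · intro j
          simp only [Fin.cons_succ]
          refine le_trans ?_ (hbad' j)
          have hsub : (C' j).filter (fun v => ∃ u ∈ S,
              (∀ j', j' ≤ j.succ → u ∉ (Fin.cons C₀ C' : Fin (k'+1) → Finset V) j') ∧ G.edist v u ≤ (2:ℕ∞))
              ⊆ (C' j).filter (fun v => ∃ u ∈ S',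
              (∀ j', j' ≤ j → u ∉ C' j') ∧ G.edist v u ≤ (2:ℕ∞)) := by
            refine Finset.monotone_filter_right _ ?_
            intro v _ ⟨u, huS, hnot, hd⟩
            refine ⟨u, Finset.mem_sdiff.mpr ⟨huS, by simpa using hnot 0 (Fin.zero_le _)⟩,
              fun j' hj' => ?_, hd⟩
            have := hnot j'.succ (by simpa [Fin.succ_le_succ_iff] using hj')
            simpa using this
          exact_mod_cast Nat.cast_le.mpr (Finset.card_le_card hsub)

theorem stmt10 [Fintype V] (G : SimpleGraph V) (t β : ℝ) (ht : 0 < t) (hβ : 0 < β)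
    {ι : Type*} [Fintype ι] (w : ι → ℝ) (Ps : ι → Set (Set V))
    (hw0 : ∀ i, 0 ≤ w i) (hw1 : ∑ i, w i = 1)
    (hpart : ∀ i, w i ≠ 0 → Setoid.IsPartition (Ps i))
    (hdiam : ∀ i, w i ≠ 0 → ∀ P ∈ Ps i, ∀ u ∈ P, ∀ x ∈ P, edistLE G u x t)
    (hpad : ∀ z : V, 1 - 2 * β / t ≤
      ∑ i ∈ Finset.univ.filter (fun i => ∀ P ∈ Ps i, z ∈ P → sball G z 2 ⊆ P), w i) :
    ∃ (k : ℕ) (C : Fin k → Set V),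
      (∀ i, (C i).Nonempty) ∧
      Pairwise (Function.onFun Disjoint C) ∧
      (⋃ i, C i) = Set.univ ∧
      (∀ i, ∀ u ∈ C i, ∀ x ∈ C i, edistLE G u x t) ∧
      (∀ i, ((closeSet G C i).ncard : ℝ) ≤ (2 * β / t) * ((C i).ncard : ℝ)) := by
  obtain ⟨k, Cf, hne, hmem, hdisj, hdiam', hbad⟩ :=
    build_clusters G t β w Ps hw0 hw1 hpart hdiam hpad Finset.univ.card Finset.univ le_rfl
  refine ⟨k, fun i => (Cf i : Set V), ?_, ?_, ?_, ?_, ?_⟩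
  · intro i; exact_mod_cast hne i
  · intro i j hij
    exact Finset.disjoint_coe.mpr (hdisj i j hij)
  · ext v
    simp only [Set.mem_iUnion, Set.mem_univ, iff_true, Finset.mem_coe]
    exact (hmem v).mp (Finset.mem_univ v)
  · exact fun i u hu x hx => hdiam' i u hu x hx
  · intro i
    have hcs : closeSet G (fun i => ((Cf i : Set V))) i
        = (((Cf i).filter (fun v => ∃ u ∈ Finset.univ,
            (∀ j, j ≤ i → u ∉ Cf j) ∧ G.edist v u ≤ (2:ℕ∞))) : Set V) := by
      ext v
      simp only [closeSet, Set.mem_setOf_eq, Finset.coe_filter, Finset.mem_coe,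
        Finset.mem_univ, true_and, exists_prop]
    rw [hcs, Set.ncard_coe_finset, Set.ncard_coe_finset]
    have h := hbad i
    convert h using 4
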